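/- For every admissible integer n, the transitive tournament TT_n admits a chain–collider–fork decomposition containing exactly ⌊(n−1)/2⌋ chains, exactly ⌊n/4⌋ colliders, and exactly n(n−1)/4 − ⌊(n−1)/2⌋ − ⌊n/4⌋ forks. -/

import Mathlib

/-- The arc set of the transitive tournament `TT n` on vertices `Fin n`
(vertex `v_{i+1}` of the paper is index `i`): there is an arc `(i, j)` iff `i < j`. -/
def ttArcs (n : ℕ) : Finset (Fin n × Fin n) :=
  Finset.univ.filter fun p => p.1 < p.2

/-- A chain: a two-arc block `{(i,j), (j,k)}` with `i < j < k`. -/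
def IsChainMotif {n : ℕ} (b : Finset (Fin n × Fin n)) : Prop :=
  ∃ i j k : Fin n, i < j ∧ j < k ∧ b = {(i, j), (j, k)}

/-- A collider: a two-arc block `{(i,j), (k,j)}` with `i, k < j` and `i ≠ k`. -/
def IsColliderMotif {n : ℕ} (b : Finset (Fin n × Fin n)) : Prop :=
  ∃ i k j : Fin n, i < j ∧ k < j ∧ i ≠ k ∧ b = {(i, j), (k, j)}

/-- A fork: a two-arc block `{(i,j), (i,k)}` with `i < j`, `i < k` and `j ≠ k`. -/
def IsForkMotif {n : ℕ} (b : Finset (Fin n × Fin n)) : Prop :=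
  ∃ i j k : Fin n, i < j ∧ i < k ∧ j ≠ k ∧ b = {(i, j), (i, k)}

instance {n : ℕ} : DecidablePred (IsChainMotif (n := n)) := fun b => by
  unfold IsChainMotif; infer_instance

instance {n : ℕ} : DecidablePred (IsColliderMotif (n := n)) := fun b => by
  unfold IsColliderMotif; infer_instance

instance {n : ℕ} : DecidablePred (IsForkMotif (n := n)) := fun b => by
  unfold IsForkMotif; infer_instance

/-- `P` is a decomposition of the arc set of `TT n`: its blocks are pairwise
disjoint and their union is the whole arc set. -/
def IsTTDecomposition {n : ℕ} (P : Finset (Finset (Fin n × Fin n))) : Prop :=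
  (P : Set (Finset (Fin n × Fin n))).PairwiseDisjoint id ∧ P.sup id = ttArcs n

/-- `n` is admissible iff `n ≡ 0` or `1 (mod 4)`. -/
def Admissible (n : ℕ) : Prop := n % 4 = 0 ∨ n % 4 = 1

-- ====== auxiliary development ======
open Finset

namespace TTCCF

lemma mem_ttArcs {n : ℕ} {p : Fin n × Fin n} : p ∈ ttArcs n ↔ p.1 < p.2 := by
  simp [ttArcs]

/-- mutual exclusivity -/
lemma chain_not_collider {n : ℕ} {b : Finset (Fin n × Fin n)}
    (hc : IsChainMotif b) : ¬ IsColliderMotif b := by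
  obtain ⟨i, j, k, hij, hjk, rfl⟩ := hc
  rintro ⟨i', k', j', _, _, _, hb⟩
  have h1 : (i, j) ∈ ({(i', j'), (k', j')} : Finset (Fin n × Fin n)) := by
    rw [← hb]; simp
  have h2 : (j, k) ∈ ({(i', j'), (k', j')} : Finset (Fin n × Fin n)) := by
    rw [← hb]; simp
  simp only [mem_insert, mem_singleton, Prod.mk.injEq] at h1 h2
  have hj : j = j' := by tauto
  have hk : k = j' := by tauto
  exact absurd hjk (by rw [hj, hk]; exact lt_irrefl _)

lemma chain_not_fork {n : ℕ} {b : Finset (Fin n × Fin n)}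
    (hc : IsChainMotif b) : ¬ IsForkMotif b := by
  obtain ⟨i, j, k, hij, hjk, rfl⟩ := hc
  rintro ⟨i', j', k', _, _, _, hb⟩
  have h1 : (i, j) ∈ ({(i', j'), (i', k')} : Finset (Fin n × Fin n)) := by
    rw [← hb]; simp
  have h2 : (j, k) ∈ ({(i', j'), (i', k')} : Finset (Fin n × Fin n)) := by
    rw [← hb]; simp
  simp only [mem_insert, mem_singleton, Prod.mk.injEq] at h1 h2
  have hi : i = i' := by tauto
  have hj : j = i' := by tauto
  exact absurd hij (by rw [hi, hj]; exact lt_irrefl _)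

lemma collider_not_fork {n : ℕ} {b : Finset (Fin n × Fin n)}
    (hc : IsColliderMotif b) : ¬ IsForkMotif b := by
  obtain ⟨i, k, j, hij, hkj, hik, rfl⟩ := hc
  rintro ⟨i', j', k', _, _, _, hb⟩
  have h1 : (i, j) ∈ ({(i', j'), (i', k')} : Finset (Fin n × Fin n)) := by
    rw [← hb]; simp
  have h2 : (k, j) ∈ ({(i', j'), (i', k')} : Finset (Fin n × Fin n)) := by
    rw [← hb]; simp
  simp only [mem_insert, mem_singleton, Prod.mk.injEq] at h1 h2
  have hi : i = i' := by tauto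
  have hk : k = i' := by tauto
  exact hik (hi.trans hk.symm)

lemma motif_subset {n : ℕ} {b : Finset (Fin n × Fin n)}
    (h : IsChainMotif b ∨ IsColliderMotif b ∨ IsForkMotif b) : b ⊆ ttArcs n := by
  intro p hp
  rw [mem_ttArcs]
  rcases h with ⟨i,j,k,h1,h2,rfl⟩ | ⟨i,k,j,h1,h2,_,rfl⟩ | ⟨i,j,k,h1,h2,_,rfl⟩ <;>
    simp only [mem_insert, mem_singleton] at hp <;>
    rcases hp with rfl | rfl <;> simp_all

lemma motif_nonempty {n : ℕ} {b : Finset (Fin n × Fin n)}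
    (h : IsChainMotif b ∨ IsColliderMotif b ∨ IsForkMotif b) : b.Nonempty := by
  rcases h with ⟨i,j,k,_,_,rfl⟩ | ⟨i,k,j,_,_,_,rfl⟩ | ⟨i,j,k,_,_,_,rfl⟩ <;>
    exact ⟨_, mem_insert_self _ _⟩

-- the embedding
def emb (m : ℕ) (p : Fin m × Fin m) : Fin (m + 4) × Fin (m + 4) :=
  (Fin.castAdd 4 p.1, Fin.castAdd 4 p.2)

lemma emb_injective (m : ℕ) : Function.Injective (emb m) := by
  intro p q h
  simp only [emb, Prod.mk.injEq] at h
  have h1 := congrArg Fin.val h.1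
  have h2 := congrArg Fin.val h.2
  simp [Fin.castAdd] at h1 h2
  exact Prod.ext (Fin.ext h1) (Fin.ext h2)

def blockEmb (m : ℕ) (b : Finset (Fin m × Fin m)) : Finset (Fin (m + 4) × Fin (m + 4)) :=
  b.image (emb m)

lemma blockEmb_injective (m : ℕ) : Function.Injective (blockEmb m) :=
  Finset.image_injective (emb_injective m)

lemma emb_snd_lt {m : ℕ} (p : Fin m × Fin m) : ((emb m p).2 : ℕ) < m := by
  simp [emb, Fin.castAdd]

-- special vertices
def vA (m : ℕ) : Fin (m + 4) := ⟨m, by omega⟩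
def vB (m : ℕ) : Fin (m + 4) := ⟨m + 1, by omega⟩
def vC (m : ℕ) : Fin (m + 4) := ⟨m + 2, by omega⟩
def vD (m : ℕ) : Fin (m + 4) := ⟨m + 3, by omega⟩

def newChain1 (m : ℕ) : Finset (Fin (m + 4) × Fin (m + 4)) := {(vA m, vB m), (vB m, vC m)}
def newChain2 (m : ℕ) : Finset (Fin (m + 4) × Fin (m + 4)) := {(vA m, vC m), (vC m, vD m)}
def newCollider (m : ℕ) : Finset (Fin (m + 4) × Fin (m + 4)) := {(vA m, vD m), (vB m, vD m)}
def fork1 (m : ℕ) (i : Fin m) : Finset (Fin (m + 4) × Fin (m + 4)) :=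
  {(Fin.castAdd 4 i, vA m), (Fin.castAdd 4 i, vB m)}
def fork2 (m : ℕ) (i : Fin m) : Finset (Fin (m + 4) × Fin (m + 4)) :=
  {(Fin.castAdd 4 i, vC m), (Fin.castAdd 4 i, vD m)}

def newBlocks (m : ℕ) : Finset (Finset (Fin (m + 4) × Fin (m + 4))) :=
  {newChain1 m, newChain2 m, newCollider m} ∪ univ.image (fork1 m) ∪ univ.image (fork2 m)

def stepP (m : ℕ) (P : Finset (Finset (Fin m × Fin m))) :
    Finset (Finset (Fin (m + 4) × Fin (m + 4))) :=
  P.image (blockEmb m) ∪ newBlocks m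

end TTCCF

namespace TTCCF

lemma mem_newBlocks {m : ℕ} {b : Finset (Fin (m + 4) × Fin (m + 4))} :
    b ∈ newBlocks m ↔
      b = newChain1 m ∨ b = newChain2 m ∨ b = newCollider m ∨
      (∃ i, b = fork1 m i) ∨ (∃ i, b = fork2 m i) := by
  simp [newBlocks, mem_union, mem_insert, mem_singleton, mem_image, eq_comm, or_assoc]

lemma newBlocks_arc_snd {m : ℕ} {b : Finset (Fin (m + 4) × Fin (m + 4))}
    (hb : b ∈ newBlocks m) {p : Fin (m + 4) × Fin (m + 4)} (hp : p ∈ b) :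
    m ≤ (p.2 : ℕ) ∧ p.1 < p.2 := by
  rw [mem_newBlocks] at hb
  rcases hb with rfl | rfl | rfl | ⟨i, rfl⟩ | ⟨i, rfl⟩ <;>
    simp only [newChain1, newChain2, newCollider, fork1, fork2,
      mem_insert, mem_singleton] at hp <;>
    rcases hp with rfl | rfl <;>
    simp [vA, vB, vC, vD, Fin.lt_def, Fin.castAdd] <;> omega

lemma blockEmb_arc_snd {m : ℕ} {b : Finset (Fin m × Fin m)}
    {p : Fin (m + 4) × Fin (m + 4)} (hp : p ∈ blockEmb m b) : (p.2 : ℕ) < m := by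
  simp only [blockEmb, mem_image] at hp
  obtain ⟨q, _, rfl⟩ := hp
  exact emb_snd_lt q

lemma old_new_arc_disjoint {m : ℕ} {b : Finset (Fin m × Fin m)}
    {c : Finset (Fin (m + 4) × Fin (m + 4))} (hc : c ∈ newBlocks m) :
    Disjoint (blockEmb m b) c := by
  rw [Finset.disjoint_left]
  intro p hp hpc
  have h1 := blockEmb_arc_snd hp
  have h2 := (newBlocks_arc_snd hc hpc).1
  omega

lemma old_new_block_disjoint {m : ℕ} {P : Finset (Finset (Fin m × Fin m))}
    (hP : ∀ b ∈ P, b.Nonempty) :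
    Disjoint (P.image (blockEmb m)) (newBlocks m) := by
  rw [Finset.disjoint_left]
  intro c hc hcnew
  simp only [mem_image] at hc
  obtain ⟨b, hb, rfl⟩ := hc
  obtain ⟨q, hq⟩ := hP b hb
  have hq' : emb m q ∈ blockEmb m b := mem_image_of_mem _ hq
  have h1 := blockEmb_arc_snd hq'
  have h2 := (newBlocks_arc_snd hcnew hq').1
  omega

end TTCCF

namespace TTCCF

lemma newBlocks_pairwiseDisjoint {m : ℕ} :
    ∀ x ∈ newBlocks m, ∀ y ∈ newBlocks m, x ≠ y → Disjoint x y := by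
  intro x hx y hy hxy
  rw [mem_newBlocks] at hx hy
  rw [Finset.disjoint_left]
  intro p hp hq
  rcases hx with rfl | rfl | rfl | ⟨i, rfl⟩ | ⟨i, rfl⟩ <;>
    rcases hy with rfl | rfl | rfl | ⟨j, rfl⟩ | ⟨j, rfl⟩ <;>
    simp only [newChain1, newChain2, newCollider, fork1, fork2, vA, vB, vC, vD,
      mem_insert, mem_singleton, Prod.ext_iff, Fin.ext_iff, Fin.coe_castAdd] at hp hq <;>
    (try have hi := i.isLt) <;> (try have hj := j.isLt) <;>
    first
      | exact hxy rfl
      | omega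
      | exact hxy (congrArg _ (Fin.ext (by omega)))

lemma blockEmb_pair {m : ℕ} (p q : Fin m × Fin m) :
    blockEmb m {p, q} = {emb m p, emb m q} := by
  unfold blockEmb
  rw [Finset.image_insert, Finset.image_singleton]

lemma castAdd_lt_iff {m : ℕ} {x y : Fin m} : Fin.castAdd 4 x < Fin.castAdd 4 y ↔ x < y := by
  simp only [Fin.lt_def, Fin.coe_castAdd]

lemma castAdd_inj {m : ℕ} {x y : Fin m} (h : Fin.castAdd 4 x = Fin.castAdd 4 y) : x = y := by
  have := congrArg Fin.val h
  simp at this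
  exact Fin.ext this

lemma isChain_blockEmb {m : ℕ} {b : Finset (Fin m × Fin m)} :
    IsChainMotif (blockEmb m b) ↔ IsChainMotif b := by
  constructor
  · rintro ⟨i, j, k, hij, hjk, himg⟩
    have h1 : (i, j) ∈ blockEmb m b := by rw [himg]; simp
    have h2 : (j, k) ∈ blockEmb m b := by rw [himg]; simp
    simp only [blockEmb, mem_image] at h1 h2
    obtain ⟨⟨x, y⟩, hxy, hxyeq⟩ := h1
    obtain ⟨⟨y', z⟩, hyz, hyzeq⟩ := h2
    simp only [emb, Prod.mk.injEq] at hxyeq hyzeq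
    have hyy : y' = y := castAdd_inj (hyzeq.1.trans hxyeq.2.symm)
    rw [hyy] at hyzeq
    refine ⟨x, y, z, ?_, ?_, ?_⟩
    · rw [← castAdd_lt_iff, hxyeq.1, hxyeq.2]; exact hij
    · rw [← castAdd_lt_iff, hxyeq.2, hyzeq.2]; exact hjk
    · apply blockEmb_injective
      rw [himg, blockEmb_pair]
      simp [emb, hxyeq.1, hxyeq.2, hyzeq.2]
  · rintro ⟨i, j, k, hij, hjk, rfl⟩
    exact ⟨Fin.castAdd 4 i, Fin.castAdd 4 j, Fin.castAdd 4 k,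
      castAdd_lt_iff.2 hij, castAdd_lt_iff.2 hjk, by rw [blockEmb_pair]; rfl⟩

lemma isCollider_blockEmb {m : ℕ} {b : Finset (Fin m × Fin m)} :
    IsColliderMotif (blockEmb m b) ↔ IsColliderMotif b := by
  constructor
  · rintro ⟨i, k, j, hij, hkj, hik, himg⟩
    have h1 : (i, j) ∈ blockEmb m b := by rw [himg]; simp
    have h2 : (k, j) ∈ blockEmb m b := by rw [himg]; simp
    simp only [blockEmb, mem_image] at h1 h2
    obtain ⟨⟨x, y⟩, hxy, hxyeq⟩ := h1
    obtain ⟨⟨z, y'⟩, hzy, hzyeq⟩ := h2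
    simp only [emb, Prod.mk.injEq] at hxyeq hzyeq
    have hyy : y' = y := castAdd_inj (hzyeq.2.trans hxyeq.2.symm)
    rw [hyy] at hzyeq
    refine ⟨x, z, y, ?_, ?_, ?_, ?_⟩
    · rw [← castAdd_lt_iff, hxyeq.1, hxyeq.2]; exact hij
    · rw [← castAdd_lt_iff, hzyeq.1, hxyeq.2]; exact hkj
    · intro h; exact hik (by rw [← hxyeq.1, ← hzyeq.1, h])
    · apply blockEmb_injective
      rw [himg, blockEmb_pair]
      simp [emb, hxyeq.1, hxyeq.2, hzyeq.1]
  · rintro ⟨i, k, j, hij, hkj, hik, rfl⟩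
    exact ⟨Fin.castAdd 4 i, Fin.castAdd 4 k, Fin.castAdd 4 j,
      castAdd_lt_iff.2 hij, castAdd_lt_iff.2 hkj, fun h => hik (castAdd_inj h),
      by rw [blockEmb_pair]; rfl⟩

lemma isFork_blockEmb {m : ℕ} {b : Finset (Fin m × Fin m)} :
    IsForkMotif (blockEmb m b) ↔ IsForkMotif b := by
  constructor
  · rintro ⟨i, j, k, hij, hik, hjk, himg⟩
    have h1 : (i, j) ∈ blockEmb m b := by rw [himg]; simp
    have h2 : (i, k) ∈ blockEmb m b := by rw [himg]; simp
    simp only [blockEmb, mem_image] at h1 h2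
    obtain ⟨⟨x, y⟩, hxy, hxyeq⟩ := h1
    obtain ⟨⟨x', z⟩, hxz, hxzeq⟩ := h2
    simp only [emb, Prod.mk.injEq] at hxyeq hxzeq
    have hxx : x' = x := castAdd_inj (hxzeq.1.trans hxyeq.1.symm)
    rw [hxx] at hxzeq
    refine ⟨x, y, z, ?_, ?_, ?_, ?_⟩
    · rw [← castAdd_lt_iff, hxyeq.1, hxyeq.2]; exact hij
    · rw [← castAdd_lt_iff, hxyeq.1, hxzeq.2]; exact hik
    · intro h; exact hjk (by rw [← hxyeq.2, ← hxzeq.2, h])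
    · apply blockEmb_injective
      rw [himg, blockEmb_pair]
      simp [emb, hxyeq.1, hxyeq.2, hxzeq.2]
  · rintro ⟨i, j, k, hij, hik, hjk, rfl⟩
    exact ⟨Fin.castAdd 4 i, Fin.castAdd 4 j, Fin.castAdd 4 k,
      castAdd_lt_iff.2 hij, castAdd_lt_iff.2 hik, fun h => hjk (castAdd_inj h),
      by rw [blockEmb_pair]; rfl⟩

end TTCCF

namespace TTCCF

variable {m : ℕ}

lemma isChain_newChain1 : IsChainMotif (newChain1 m) :=
  ⟨vA m, vB m, vC m, by simp [vA, vB, Fin.lt_def], by simp [vB, vC, Fin.lt_def], rfl⟩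

lemma isChain_newChain2 : IsChainMotif (newChain2 m) :=
  ⟨vA m, vC m, vD m, by simp [vA, vC, Fin.lt_def], by simp [vC, vD, Fin.lt_def], rfl⟩

lemma isCollider_newCollider : IsColliderMotif (newCollider m) :=
  ⟨vA m, vB m, vD m, by simp [vA, vD, Fin.lt_def], by simp [vB, vD, Fin.lt_def],
    by simp [vA, vB, Fin.ext_iff], rfl⟩

lemma isFork_fork1 (i : Fin m) : IsForkMotif (fork1 m i) :=
  ⟨Fin.castAdd 4 i, vA m, vB m, by simp [vA, Fin.lt_def, i.isLt],
    by simp [vB, Fin.lt_def], by simp [vA, vB, Fin.ext_iff], rfl⟩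

lemma isFork_fork2 (i : Fin m) : IsForkMotif (fork2 m i) :=
  ⟨Fin.castAdd 4 i, vC m, vD m, by simp [vC, Fin.lt_def]; omega,
    by simp [vD, Fin.lt_def]; omega, by simp [vC, vD, Fin.ext_iff], rfl⟩

lemma newChain1_ne_newChain2 : newChain1 m ≠ newChain2 m := by
  intro h
  have h1 : (vA m, vB m) ∈ newChain1 m := by simp [newChain1]
  rw [h] at h1
  simp only [newChain2, mem_insert, mem_singleton, Prod.ext_iff, Fin.ext_iff,
    vA, vB, vC, vD] at h1
  omega

lemma fork1_injective : Function.Injective (fork1 m) := by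
  intro i j h
  have h1 : (Fin.castAdd 4 i, vA m) ∈ fork1 m i := by simp [fork1]
  rw [h] at h1
  simp only [fork1, mem_insert, mem_singleton, Prod.ext_iff, Fin.ext_iff,
    Fin.coe_castAdd, vA, vB] at h1
  exact Fin.ext (by omega)

lemma fork2_injective : Function.Injective (fork2 m) := by
  intro i j h
  have h1 : (Fin.castAdd 4 i, vC m) ∈ fork2 m i := by simp [fork2]
  rw [h] at h1
  simp only [fork2, mem_insert, mem_singleton, Prod.ext_iff, Fin.ext_iff,
    Fin.coe_castAdd, vC, vD] at h1
  exact Fin.ext (by omega)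

lemma fork1_ne_fork2 (i j : Fin m) : fork1 m i ≠ fork2 m j := by
  intro h
  have h1 : (Fin.castAdd 4 i, vA m) ∈ fork1 m i := by simp [fork1]
  rw [h] at h1
  simp only [fork2, mem_insert, mem_singleton, Prod.ext_iff, Fin.ext_iff,
    Fin.coe_castAdd, vA, vC, vD] at h1
  omega

lemma filter_chain_newBlocks :
    (newBlocks m).filter IsChainMotif = {newChain1 m, newChain2 m} := by
  ext b
  simp only [mem_filter, mem_newBlocks, mem_insert, mem_singleton]
  constructor
  · rintro ⟨rfl | rfl | rfl | ⟨i, rfl⟩ | ⟨i, rfl⟩, hch⟩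
    · exact Or.inl rfl
    · exact Or.inr rfl
    · exact absurd isCollider_newCollider (chain_not_collider hch)
    · exact absurd (isFork_fork1 i) (chain_not_fork hch)
    · exact absurd (isFork_fork2 i) (chain_not_fork hch)
  · rintro (rfl | rfl)
    · exact ⟨Or.inl rfl, isChain_newChain1⟩
    · exact ⟨Or.inr (Or.inl rfl), isChain_newChain2⟩

lemma filter_collider_newBlocks :
    (newBlocks m).filter IsColliderMotif = {newCollider m} := by
  ext b
  simp only [mem_filter, mem_newBlocks, mem_singleton]
  constructor
  · rintro ⟨rfl | rfl | rfl | ⟨i, rfl⟩ | ⟨i, rfl⟩, hch⟩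
    · exact absurd hch (chain_not_collider isChain_newChain1)
    · exact absurd hch (chain_not_collider isChain_newChain2)
    · rfl
    · exact absurd (isFork_fork1 i) (collider_not_fork hch)
    · exact absurd (isFork_fork2 i) (collider_not_fork hch)
  · rintro rfl
    exact ⟨Or.inr (Or.inr (Or.inl rfl)), isCollider_newCollider⟩

lemma filter_fork_newBlocks :
    (newBlocks m).filter IsForkMotif = univ.image (fork1 m) ∪ univ.image (fork2 m) := by
  ext b
  simp only [mem_filter, mem_newBlocks, mem_union, mem_image, mem_univ, true_and]
  constructor
  · rintro ⟨rfl | rfl | rfl | ⟨i, rfl⟩ | ⟨i, rfl⟩, hch⟩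
    · exact absurd hch (chain_not_fork isChain_newChain1)
    · exact absurd hch (chain_not_fork isChain_newChain2)
    · exact absurd hch (collider_not_fork isCollider_newCollider)
    · exact Or.inl ⟨i, rfl⟩
    · exact Or.inr ⟨i, rfl⟩
  · rintro (⟨i, rfl⟩ | ⟨i, rfl⟩)
    · exact ⟨Or.inr (Or.inr (Or.inr (Or.inl ⟨i, rfl⟩))), isFork_fork1 i⟩
    · exact ⟨Or.inr (Or.inr (Or.inr (Or.inr ⟨i, rfl⟩))), isFork_fork2 i⟩

lemma card_filter_chain_newBlocks : ((newBlocks m).filter IsChainMotif).card = 2 := by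
  rw [filter_chain_newBlocks, card_insert_of_notMem (by simp [newChain1_ne_newChain2]),
    card_singleton]

lemma card_filter_collider_newBlocks : ((newBlocks m).filter IsColliderMotif).card = 1 := by
  rw [filter_collider_newBlocks, card_singleton]

lemma card_filter_fork_newBlocks : ((newBlocks m).filter IsForkMotif).card = 2 * m := by
  rw [filter_fork_newBlocks, card_union_of_disjoint, card_image_of_injective _ fork1_injective,
    card_image_of_injective _ fork2_injective, card_univ, Fintype.card_fin]
  · ring
  · rw [Finset.disjoint_left]
    rintro b hb hb2
    simp only [mem_image, mem_univ, true_and] at hb hb2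
    obtain ⟨i, rfl⟩ := hb
    obtain ⟨j, hj⟩ := hb2
    exact fork1_ne_fork2 i j hj.symm

end TTCCF

namespace TTCCF

variable {m : ℕ} {P : Finset (Finset (Fin m × Fin m))}

lemma stepP_motif (hP : ∀ b ∈ P, IsChainMotif b ∨ IsColliderMotif b ∨ IsForkMotif b) :
    ∀ b ∈ stepP m P, IsChainMotif b ∨ IsColliderMotif b ∨ IsForkMotif b := by
  intro b hb
  rcases mem_union.1 hb with hb | hb
  · simp only [mem_image] at hb
    obtain ⟨b0, hb0, rfl⟩ := hb
    rcases hP b0 hb0 with h | h | h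
    · exact Or.inl (isChain_blockEmb.2 h)
    · exact Or.inr (Or.inl (isCollider_blockEmb.2 h))
    · exact Or.inr (Or.inr (isFork_blockEmb.2 h))
  · rcases mem_newBlocks.1 hb with rfl | rfl | rfl | ⟨i, rfl⟩ | ⟨i, rfl⟩
    · exact Or.inl isChain_newChain1
    · exact Or.inl isChain_newChain2
    · exact Or.inr (Or.inl isCollider_newCollider)
    · exact Or.inr (Or.inr (isFork_fork1 i))
    · exact Or.inr (Or.inr (isFork_fork2 i))

lemma stepP_pairwiseDisjoint
    (hpd : (P : Set (Finset (Fin m × Fin m))).PairwiseDisjoint id) :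
    ((stepP m P : Set (Finset (Fin (m + 4) × Fin (m + 4))))).PairwiseDisjoint id := by
  intro x hx y hy hxy
  simp only [Finset.mem_coe] at hx hy
  rcases mem_union.1 hx with hx' | hx' <;> rcases mem_union.1 hy with hy' | hy'
  · simp only [mem_image] at hx' hy'
    obtain ⟨b1, hb1, rfl⟩ := hx'
    obtain ⟨b2, hb2, rfl⟩ := hy'
    have hne : b1 ≠ b2 := fun h => hxy (by rw [h])
    have := hpd (Finset.mem_coe.2 hb1) (Finset.mem_coe.2 hb2) hne
    exact (Finset.disjoint_image (emb_injective m)).2 this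
  · simp only [mem_image] at hx'
    obtain ⟨b1, _, rfl⟩ := hx'
    exact old_new_arc_disjoint hy'
  · simp only [mem_image] at hy'
    obtain ⟨b2, _, rfl⟩ := hy'
    exact (old_new_arc_disjoint hx').symm
  · exact newBlocks_pairwiseDisjoint x hx' y hy' hxy

lemma stepP_sup (hsup : P.sup id = ttArcs m) :
    (stepP m P).sup id = ttArcs (m + 4) := by
  ext p
  rw [Finset.mem_sup, mem_ttArcs]
  constructor
  · rintro ⟨b, hb, hpb⟩
    rcases mem_union.1 hb with hb' | hb'
    · simp only [mem_image] at hb'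
      obtain ⟨b0, hb0, rfl⟩ := hb'
      simp only [id_eq, blockEmb, mem_image] at hpb
      obtain ⟨q, hq, rfl⟩ := hpb
      have hq' : q ∈ P.sup id := Finset.mem_sup.2 ⟨b0, hb0, hq⟩
      rw [hsup, mem_ttArcs] at hq'
      exact castAdd_lt_iff.2 hq'
    · exact (newBlocks_arc_snd hb' hpb).2
  · intro hlt
    have hlt' : (p.1 : ℕ) < (p.2 : ℕ) := hlt
    by_cases h2 : (p.2 : ℕ) < m
    · -- old arc
      have h1 : (p.1 : ℕ) < m := lt_trans hlt' h2
      set q : Fin m × Fin m := (⟨p.1, h1⟩, ⟨p.2, h2⟩) with hq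
      have hqe : emb m q = p := by
        simp [emb, hq, Prod.ext_iff, Fin.ext_iff]
      have hq' : q ∈ P.sup id := by
        rw [hsup, mem_ttArcs]
        exact hlt'
      obtain ⟨b0, hb0, hqb0⟩ := Finset.mem_sup.1 hq'
      exact ⟨blockEmb m b0, mem_union_left _ (mem_image_of_mem _ hb0),
        hqe ▸ mem_image_of_mem _ hqb0⟩
    · push_neg at h2
      by_cases h1 : (p.1 : ℕ) < m
      · -- a fork arc
        set i : Fin m := ⟨p.1, h1⟩ with hi
        have h2' : (p.2 : ℕ) < m + 4 := p.2.isLt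
        by_cases hAB : (p.2 : ℕ) ≤ m + 1
        · refine ⟨fork1 m i, mem_union_right _ (mem_newBlocks.2 (Or.inr (Or.inr (Or.inr
            (Or.inl ⟨i, rfl⟩))))), ?_⟩
          have hival : (i : ℕ) = (p.1 : ℕ) := rfl
          simp [fork1, Prod.ext_iff, Fin.ext_iff, vA, vB]
          omega
        · refine ⟨fork2 m i, mem_union_right _ (mem_newBlocks.2 (Or.inr (Or.inr (Or.inr
            (Or.inr ⟨i, rfl⟩))))), ?_⟩
          have hival : (i : ℕ) = (p.1 : ℕ) := rfl
          simp [fork2, Prod.ext_iff, Fin.ext_iff, vC, vD]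
          omega
      · -- an internal arc
        push_neg at h1
        have h2' : (p.2 : ℕ) < m + 4 := p.2.isLt
        have hmem : p ∈ newChain1 m ∪ newChain2 m ∪ newCollider m := by
          simp only [mem_union, newChain1, newChain2, newCollider, mem_insert,
            mem_singleton, Prod.ext_iff, Fin.ext_iff, vA, vB, vC, vD]
          omega
        rcases mem_union.1 hmem with h | h
        · rcases mem_union.1 h with h | h
          · exact ⟨newChain1 m, mem_union_right _ (mem_newBlocks.2 (Or.inl rfl)), h⟩
          · exact ⟨newChain2 m, mem_union_right _ (mem_newBlocks.2 (Or.inr (Or.inl rfl))), h⟩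
        · exact ⟨newCollider m, mem_union_right _
            (mem_newBlocks.2 (Or.inr (Or.inr (Or.inl rfl)))), h⟩

end TTCCF

namespace TTCCF

variable {m : ℕ} {P : Finset (Finset (Fin m × Fin m))}

lemma stepP_parts_disjoint (hP : ∀ b ∈ P, IsChainMotif b ∨ IsColliderMotif b ∨ IsForkMotif b) :
    Disjoint (P.image (blockEmb m)) (newBlocks m) :=
  old_new_block_disjoint (fun b hb => motif_nonempty (hP b hb))

lemma card_filter_image (pred : ∀ {k : ℕ}, Finset (Fin k × Fin k) → Prop)
    [∀ k, DecidablePred (pred (k := k))]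
    (hiff : ∀ b : Finset (Fin m × Fin m), pred (blockEmb m b) ↔ pred b) :
    ((P.image (blockEmb m)).filter pred).card = (P.filter pred).card := by
  rw [Finset.filter_image]
  rw [Finset.card_image_of_injective _ (blockEmb_injective m)]
  congr 1
  exact Finset.filter_congr (fun b _ => by rw [hiff b])

lemma stepP_card_chain (hP : ∀ b ∈ P, IsChainMotif b ∨ IsColliderMotif b ∨ IsForkMotif b) :
    ((stepP m P).filter IsChainMotif).card = (P.filter IsChainMotif).card + 2 := by
  rw [stepP, filter_union,
    card_union_of_disjoint (Finset.disjoint_filter_filter (stepP_parts_disjoint hP)),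
    card_filter_chain_newBlocks,
    card_filter_image (fun b => IsChainMotif b) (fun b => isChain_blockEmb)]

lemma stepP_card_collider (hP : ∀ b ∈ P, IsChainMotif b ∨ IsColliderMotif b ∨ IsForkMotif b) :
    ((stepP m P).filter IsColliderMotif).card = (P.filter IsColliderMotif).card + 1 := by
  rw [stepP, filter_union,
    card_union_of_disjoint (Finset.disjoint_filter_filter (stepP_parts_disjoint hP)),
    card_filter_collider_newBlocks,
    card_filter_image (fun b => IsColliderMotif b) (fun b => isCollider_blockEmb)]

lemma stepP_card_fork (hP : ∀ b ∈ P, IsChainMotif b ∨ IsColliderMotif b ∨ IsForkMotif b) :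
    ((stepP m P).filter IsForkMotif).card = (P.filter IsForkMotif).card + 2 * m := by
  rw [stepP, filter_union,
    card_union_of_disjoint (Finset.disjoint_filter_filter (stepP_parts_disjoint hP)),
    card_filter_fork_newBlocks,
    card_filter_image (fun b => IsForkMotif b) (fun b => isFork_blockEmb)]

end TTCCF

namespace TTCCF

def P4 : Finset (Finset (Fin 4 × Fin 4)) :=
  {{(0, 1), (1, 2)}, {(1, 3), (2, 3)}, {(0, 2), (0, 3)}}

lemma P4_sup : P4.sup id = ttArcs 4 := by decide

lemma P4_disj : ∀ x ∈ P4, ∀ y ∈ P4, x ≠ y → Disjoint x y := by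
  intro x hx y hy hxy
  rw [Finset.disjoint_iff_inter_eq_empty]
  simp only [P4, Finset.mem_insert, Finset.mem_singleton] at hx hy
  rcases hx with rfl | rfl | rfl <;> rcases hy with rfl | rfl | rfl <;>
    first | exact absurd rfl hxy | decide

lemma P4_motif : ∀ b ∈ P4, IsChainMotif b ∨ IsColliderMotif b ∨ IsForkMotif b := by
  intro b hb
  simp only [P4, Finset.mem_insert, Finset.mem_singleton] at hb
  rcases hb with rfl | rfl | rfl
  · exact Or.inl ⟨0, 1, 2, by decide, by decide, rfl⟩
  · exact Or.inr (Or.inl ⟨1, 2, 3, by decide, by decide, by decide, rfl⟩)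
  · exact Or.inr (Or.inr ⟨0, 2, 3, by decide, by decide, by decide, rfl⟩)

lemma P4_chain : (P4.filter IsChainMotif).card = 1 := by decide
lemma P4_collider : (P4.filter IsColliderMotif).card = 1 := by decide
lemma P4_fork : (P4.filter IsForkMotif).card = 1 := by decide

end TTCCF

theorem tt_ccf_decomposition_counts (n : ℕ) (hadm : Admissible n) :
    ∃ P : Finset (Finset (Fin n × Fin n)),
      IsTTDecomposition P ∧ (∀ b ∈ P, IsChainMotif b ∨ IsColliderMotif b ∨ IsForkMotif b) ∧
      (P.filter IsChainMotif).card = (n - 1) / 2 ∧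
      (P.filter IsColliderMotif).card = n / 4 ∧
      (P.filter IsForkMotif).card = n * (n - 1) / 4 - (n - 1) / 2 - n / 4 := by
  induction n using Nat.strong_induction_on with
  | _ n ih =>
    rcases Nat.lt_or_ge n 5 with hlt | hge
    · -- base cases
      unfold Admissible at hadm
      interval_cases n
      · exact ⟨∅, ⟨by simp [Set.PairwiseDisjoint, Set.Pairwise], by decide⟩, by decide,
          by decide, by decide, by decide⟩
      · exact ⟨∅, ⟨by simp [Set.PairwiseDisjoint, Set.Pairwise], by decide⟩, by decide,
          by decide, by decide, by decide⟩
      · omega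
      · omega
      · refine ⟨TTCCF.P4, ⟨?_, TTCCF.P4_sup⟩, TTCCF.P4_motif,
          TTCCF.P4_chain, TTCCF.P4_collider, TTCCF.P4_fork⟩
        intro x hx y hy hxy
        exact TTCCF.P4_disj x (Finset.mem_coe.1 hx) y (Finset.mem_coe.1 hy) hxy
    · -- inductive step
      obtain ⟨m, rfl⟩ : ∃ m, n = m + 4 := ⟨n - 4, by omega⟩
      have hm1 : 1 ≤ m := by
        rcases hadm with h | h <;> omega
      have hadm' : Admissible m := by
        rcases hadm with h | h
        · exact Or.inl (by omega)
        · exact Or.inr (by omega)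
      obtain ⟨P, ⟨hpd, hsup⟩, hmot, hc, hk, hf⟩ := ih m (by omega) hadm'
      refine ⟨TTCCF.stepP m P, ⟨TTCCF.stepP_pairwiseDisjoint hpd, TTCCF.stepP_sup hsup⟩,
        TTCCF.stepP_motif hmot, ?_, ?_, ?_⟩
      · rw [TTCCF.stepP_card_chain hmot, hc]
        omega
      · rw [TTCCF.stepP_card_collider hmot, hk]
        omega
      · rw [TTCCF.stepP_card_fork hmot, hf]
        have hrel : (m + 4) * (m + 4 - 1) = m * (m - 1) + 8 * m + 12 := by
          obtain ⟨m', rfl⟩ : ∃ m', m = m' + 1 := ⟨m - 1, by omega⟩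
          simp only [Nat.add_sub_cancel, Nat.succ_sub_one]
          ring
        have h4 : 4 ∣ m * (m - 1) := by
          rcases hadm' with h | h
          · exact dvd_mul_of_dvd_left (by omega) _
          · exact dvd_mul_of_dvd_right (by omega) _
        have hge : 3 * (m - 1) ≤ m * (m - 1) := by
          rcases Nat.lt_or_ge m 4 with h | h
          · have hm : m = 1 := by rcases hadm' with h' | h' <;> omega
            simp [hm]
          · exact Nat.mul_le_mul_right _ (by omega)
        generalize hB : (m + 4) * (m + 4 - 1) = B at hrel ⊢
        generalize hA : m * (m - 1) = A at hrel h4 hge ⊢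
        rcases hadm' with h | h <;> omega
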